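/- The group G is generated by the three involutions v, uv, and auv; in particular G is generated by involutions. -/

import Mathlib

namespace ZkDl

def n₁ (l : ℕ) : ℕ := 2 ^ (l - 1) + 1
def n₂ (l : ℕ) : ℕ := 2 ^ (l - 1) - 1

/-- The relations of the presentation
`⟨a, u, v | a^(2^l) = u^k = v^2 = 1, u a u⁻¹ = a^(n₁), v a v = a^(n₂), v u v = u⁻¹⟩`,
with generators `a = 0`, `u = 1`, `v = 2` in `Fin 3`. -/
def rels (l k : ℕ) : Set (FreeGroup (Fin 3)) :=
  { FreeGroup.of 0 ^ 2 ^ l,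
    FreeGroup.of 1 ^ k,
    FreeGroup.of 2 ^ 2,
    FreeGroup.of 1 * FreeGroup.of 0 * (FreeGroup.of 1)⁻¹ * (FreeGroup.of 0 ^ n₁ l)⁻¹,
    FreeGroup.of 2 * FreeGroup.of 0 * FreeGroup.of 2 * (FreeGroup.of 0 ^ n₂ l)⁻¹,
    FreeGroup.of 2 * FreeGroup.of 1 * FreeGroup.of 2 * FreeGroup.of 1 }

/-- The group `Z_{2^l} ⋊ D_k` given by the presentation above. -/
abbrev G (l k : ℕ) : Type := PresentedGroup (rels l k)

def a (l k : ℕ) : G l k := PresentedGroup.of 0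
def u (l k : ℕ) : G l k := PresentedGroup.of 1
def v (l k : ℕ) : G l k := PresentedGroup.of 2

lemma rel_one (l k : ℕ) {r : FreeGroup (Fin 3)} (h : r ∈ rels l k) :
    PresentedGroup.mk (rels l k) r = 1 := by
  rw [show PresentedGroup.mk (rels l k) r = QuotientGroup.mk r from rfl]
  exact (QuotientGroup.eq_one_iff (N := Subgroup.normalClosure (rels l k)) r).mpr
    (Subgroup.subset_normalClosure h)

lemma ha (l k : ℕ) : a l k ^ 2 ^ l = 1 := by
  have := rel_one l k (r := FreeGroup.of 0 ^ 2 ^ l) (Set.mem_insert _ _)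
  simpa [a, PresentedGroup.of] using this

lemma hv (l k : ℕ) : v l k ^ 2 = 1 := by
  have := rel_one l k (r := FreeGroup.of 2 ^ 2)
    (by simp [rels])
  simpa [v, PresentedGroup.of] using this

lemma hua (l k : ℕ) : u l k * a l k * (u l k)⁻¹ = a l k ^ n₁ l := by
  have := rel_one l k
    (r := FreeGroup.of 1 * FreeGroup.of 0 * (FreeGroup.of 1)⁻¹ * (FreeGroup.of 0 ^ n₁ l)⁻¹)
    (by simp [rels])
  rw [map_mul, map_mul, map_mul, map_inv, map_inv, map_pow] at this
  rw [mul_inv_eq_one] at this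
  exact this

lemma hva (l k : ℕ) : v l k * a l k * v l k = a l k ^ n₂ l := by
  have := rel_one l k
    (r := FreeGroup.of 2 * FreeGroup.of 0 * FreeGroup.of 2 * (FreeGroup.of 0 ^ n₂ l)⁻¹)
    (by simp [rels])
  rw [map_mul, map_mul, map_mul, map_inv, map_pow] at this
  rw [mul_inv_eq_one] at this
  exact this

lemma hvu (l k : ℕ) : v l k * u l k * v l k = (u l k)⁻¹ := by
  have := rel_one l k
    (r := FreeGroup.of 2 * FreeGroup.of 1 * FreeGroup.of 2 * FreeGroup.of 1)
    (by simp [rels])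
  rw [map_mul, map_mul, map_mul] at this
  rw [mul_eq_one_iff_eq_inv] at this
  exact this

end ZkDl

open ZkDl

theorem generated_by_involutions (l k : ℕ) (hl : 3 ≤ l) (hk : 4 ∣ k) :
    (v l k) ^ 2 = 1 ∧ (u l k * v l k) ^ 2 = 1 ∧ (a l k * u l k * v l k) ^ 2 = 1 ∧
    Subgroup.closure {v l k, u l k * v l k, a l k * u l k * v l k} = ⊤ := by
  have hv2 : v l k ^ 2 = 1 := hv l k
  have hvv : v l k * v l k = 1 := by rw [← sq]; exact hv2
  have hvinv : (v l k)⁻¹ = v l k := inv_eq_of_mul_eq_one_left hvv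
  have h6 := hvu l k
  have h5 := hva l k
  have h4 := hua l k
  have huvuv : u l k * v l k * u l k * v l k = 1 := by
    calc u l k * v l k * u l k * v l k = u l k * (v l k * u l k * v l k) := by group
    _ = u l k * (u l k)⁻¹ := by rw [h6]
    _ = 1 := mul_inv_cancel _
  have huv : (u l k * v l k) ^ 2 = 1 := by rw [sq, ← mul_assoc]; exact huvuv
  refine ⟨hv2, huv, ?_, ?_⟩
  · have hVA : v l k * a l k = a l k ^ n₂ l * v l k := by
      calc v l k * a l k = v l k * a l k * v l k * (v l k)⁻¹ := by group
      _ = a l k ^ n₂ l * v l k := by rw [h5, hvinv]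
    have hconj : u l k * a l k ^ n₂ l * (u l k)⁻¹ = a l k ^ (n₁ l * n₂ l) := by
      rw [← conj_pow, h4, ← pow_mul]
    have key : (a l k * u l k * v l k) ^ 2
        = a l k * (u l k * a l k ^ n₂ l * (u l k)⁻¹) * (u l k * v l k * u l k * v l k) := by
      calc (a l k * u l k * v l k) ^ 2
          = a l k * u l k * (v l k * a l k) * u l k * v l k := by rw [sq]; group
      _ = a l k * u l k * (a l k ^ n₂ l * v l k) * u l k * v l k := by rw [hVA]
      _ = a l k * (u l k * a l k ^ n₂ l * (u l k)⁻¹) * (u l k * v l k * u l k * v l k) := by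
          group
    rw [key, hconj, huvuv, mul_one, ← pow_succ']
    have hp : 1 ≤ 2 ^ (l - 1) := Nat.one_le_two_pow
    have harith : n₁ l * n₂ l + 1 = 2 ^ l * 2 ^ (l - 2) := by
      have key2 : n₁ l * n₂ l + 1 = 2 ^ (l - 1) * 2 ^ (l - 1) := by
        unfold n₁ n₂; zify [hp]; ring
      rw [key2, ← pow_add, show l - 1 + (l - 1) = l + (l - 2) by omega, pow_add]
    rw [harith, pow_mul, ha l k, one_pow]
  · rw [eq_top_iff, ← PresentedGroup.closure_range_of (rels l k)]
    rw [Subgroup.closure_le]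
    rintro x ⟨i, rfl⟩
    have hV : v l k ∈ Subgroup.closure {v l k, u l k * v l k, a l k * u l k * v l k} :=
      Subgroup.subset_closure (by simp)
    have hUV : u l k * v l k ∈ Subgroup.closure {v l k, u l k * v l k, a l k * u l k * v l k} :=
      Subgroup.subset_closure (by simp)
    have hAUV : a l k * u l k * v l k ∈
        Subgroup.closure {v l k, u l k * v l k, a l k * u l k * v l k} :=
      Subgroup.subset_closure (by simp)
    have hU : u l k ∈ Subgroup.closure {v l k, u l k * v l k, a l k * u l k * v l k} := by
      have := Subgroup.mul_mem _ hUV (Subgroup.inv_mem _ hV)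
      simpa using this
    have hA : a l k ∈ Subgroup.closure {v l k, u l k * v l k, a l k * u l k * v l k} := by
      have := Subgroup.mul_mem _ hAUV (Subgroup.inv_mem _ hUV)
      simpa [mul_assoc] using this
    fin_cases i
    · exact hA
    · exact hU
    · exact hV
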